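/- arXiv:1803.08303 — 4 statements merged into one kernel-verified Lean document; each statement's English description precedes it below -/
import Mathlib

section
/- For all integers t ≥ 2 and c ≥ 2, the alternating sum ∑_{i=0}^{t-1} (-1)^i * C(t+c-1, t-i-1) * C(t+c-1-i, t-1) * C(c+2+i, i) equals (4 + 12c + 8c² - 5ct - 7c²t - ct² + c²t²) * (c+t-1)! / (2 * (2+c)! * (t-1)!). -/
open Finset

/-- Alternating Vandermonde: ∑_{j≤a} (-1)^j C(a,j) C(b-j,n) = C(b-a, n-a). -/
private lemma altV : ∀ (a : ℕ) (n b : ℕ), a ≤ n → a ≤ b →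
    ∑ j ∈ range (a + 1), (-1 : ℚ) ^ j * ((a.choose j : ℕ) : ℚ) * (((b - j).choose n : ℕ) : ℚ)
      = (((b - a).choose (n - a) : ℕ) : ℚ) := by
  intro a
  induction a with
  | zero => intro n b _ _; simp
  | succ a ih =>
    intro n b han hab
    have h1 : a ≤ n := by omega
    have h2 : a ≤ b - 1 := by omega
    have h3 : a ≤ b := by omega
    rw [Finset.sum_range_succ' (fun j => (-1 : ℚ) ^ j * ((a+1).choose j : ℚ) * ((b - j).choose n : ℚ)) (a+1)]
    have key : ∀ j, (-1 : ℚ) ^ (j+1) * (((a+1).choose (j+1) : ℕ) : ℚ) * (((b - (j+1)).choose n : ℕ) : ℚ)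
        = -((-1 : ℚ) ^ j * (a.choose j : ℚ) * (((b-1) - j).choose n : ℚ))
          + ((-1 : ℚ) ^ (j+1) * (a.choose (j+1) : ℚ) * ((b - (j+1)).choose n : ℚ)) := by
      intro j
      have : b - (j+1) = (b-1) - j := by omega
      rw [Nat.choose_succ_succ, this]
      push_cast
      ring
    simp only [key]
    rw [Finset.sum_add_distrib, Finset.sum_neg_distrib]
    rw [ih n (b-1) h1 h2]
    have e2 : ∑ j ∈ range (a+1), (-1 : ℚ)^(j+1) * (a.choose (j+1) : ℚ) * ((b - (j+1)).choose n : ℚ)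
        = (((b - a).choose (n - a) : ℕ) : ℚ) - ((b.choose n : ℕ) : ℚ) := by
      have : ∑ j ∈ range (a+2), (-1 : ℚ)^j * (a.choose j : ℚ) * ((b - j).choose n : ℚ)
          = (((b - a).choose (n - a) : ℕ) : ℚ) := by
        rw [Finset.sum_range_succ, ih n b h1 h3]
        simp [Nat.choose_succ_self]
      rw [Finset.sum_range_succ' (fun j => (-1 : ℚ) ^ j * (a.choose j : ℚ) * ((b - j).choose n : ℚ)) (a+1)] at this
      simp only [pow_zero, Nat.choose_zero_right, Nat.cast_one, one_mul, Nat.sub_zero] at this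
      linarith [this]
    rw [e2]
    simp only [pow_zero, Nat.choose_zero_right, Nat.cast_one, one_mul, Nat.sub_zero]
    have hp : (b - a).choose (n - a) = (b - (a+1)).choose (n - (a+1)) + (b - 1 - a).choose (n - a) := by
      have eb : b - a = b - (a+1) + 1 := by omega
      have en : n - a = n - (a+1) + 1 := by omega
      have eb1 : b - 1 - a = b - (a+1) := by omega
      rw [eb, en, Nat.choose_succ_succ, eb1]
    rw [hp]
    push_cast
    ring

/-- Padded version with arbitrary range. -/
private lemma altV' (a n b N : ℕ) (han : a ≤ n) (hab : a ≤ b) (hbN : b < n + N) :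
    ∑ j ∈ range N, (-1 : ℚ) ^ j * (a.choose j : ℚ) * ((b - j).choose n : ℚ)
      = ((b - a).choose (n - a) : ℚ) := by
  have hsub1 : range N ⊆ range (max N (a+1)) := by
    apply Finset.range_subset_range.2; omega
  have hsub2 : range (a+1) ⊆ range (max N (a+1)) := by
    apply Finset.range_subset_range.2; omega
  have e1 : ∑ j ∈ range N, (-1 : ℚ) ^ j * (a.choose j : ℚ) * ((b - j).choose n : ℚ)
      = ∑ j ∈ range (max N (a+1)), (-1 : ℚ) ^ j * (a.choose j : ℚ) * ((b - j).choose n : ℚ) := by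
    apply Finset.sum_subset hsub1
    intro x hx hxN
    simp only [Finset.mem_range] at hx hxN
    have : (b - x).choose n = 0 := Nat.choose_eq_zero_of_lt (by omega)
    rw [this]; simp
  have e2 : ∑ j ∈ range (a+1), (-1 : ℚ) ^ j * (a.choose j : ℚ) * ((b - j).choose n : ℚ)
      = ∑ j ∈ range (max N (a+1)), (-1 : ℚ) ^ j * (a.choose j : ℚ) * ((b - j).choose n : ℚ) := by
    apply Finset.sum_subset hsub2
    intro x hx hxN
    simp only [Finset.mem_range] at hx hxN
    have : a.choose x = 0 := Nat.choose_eq_zero_of_lt (by omega)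
    rw [this]; simp
  rw [e1, ← e2, altV a n b han hab]

/-- Per-term transformation. -/
private lemma termQ (a e i : ℕ) :
    (-1 : ℚ) ^ i * ((a+e+2*i).choose a : ℚ) * ((a+e+i).choose (a+i) : ℚ)
        * ((e+2*i+2).choose i : ℚ)
      = ((a+e+2*i).choose (a+i) : ℚ) / ((e+i+1)*(e+i+2))
        * ((-1 : ℚ) ^ i * ((e+i).choose i : ℚ) * ((a+e+i).choose (e+i) : ℚ)
            * ((e+2*i+1)*(e+2*i+2))) := by
  have c1 := Nat.cast_choose (K := ℚ) (show a ≤ a+e+2*i by omega)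
  have c2 := Nat.cast_choose (K := ℚ) (show a+i ≤ a+e+i by omega)
  have c3 := Nat.cast_choose (K := ℚ) (show i ≤ e+2*i+2 by omega)
  have c4 := Nat.cast_choose (K := ℚ) (show a+i ≤ a+e+2*i by omega)
  have c5 := Nat.cast_choose (K := ℚ) (show i ≤ e+i by omega)
  have c6 := Nat.cast_choose (K := ℚ) (show e+i ≤ a+e+i by omega)
  have s1 : a+e+2*i - a = e+2*i := by omega
  have s2 : a+e+i - (a+i) = e := by omega
  have s3 : e+2*i+2 - i = e+i+2 := by omega
  have s4 : a+e+2*i - (a+i) = e+i := by omega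
  have s5 : e+i - i = e := by omega
  have s6 : a+e+i - (e+i) = a := by omega
  rw [s1] at c1; rw [s2] at c2; rw [s3] at c3; rw [s4] at c4; rw [s5] at c5; rw [s6] at c6
  rw [c1, c2, c3, c4, c5, c6]
  have f1 : ((e+2*i+2).factorial : ℚ) = (e+2*i+2) * (e+2*i+1) * ((e+2*i).factorial : ℚ) := by
    rw [show e+2*i+2 = (e+2*i+1)+1 by ring, Nat.factorial_succ, Nat.factorial_succ]
    push_cast; ring
  have f2 : ((e+i+2).factorial : ℚ) = (e+i+2) * (e+i+1) * ((e+i).factorial : ℚ) := by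
    rw [show e+i+2 = (e+i+1)+1 by ring, Nat.factorial_succ, Nat.factorial_succ]
    push_cast; ring
  rw [f1, f2]
  have n1 : ((a+e+2*i).factorial : ℚ) ≠ 0 := by positivity
  have n2 : ((a+e+i).factorial : ℚ) ≠ 0 := by positivity
  have n3 : ((e+2*i).factorial : ℚ) ≠ 0 := by positivity
  have n4 : ((e+i).factorial : ℚ) ≠ 0 := by positivity
  have n5 : ((a).factorial : ℚ) ≠ 0 := by positivity
  have n6 : ((e).factorial : ℚ) ≠ 0 := by positivity
  have n7 : ((i).factorial : ℚ) ≠ 0 := by positivity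
  have n8 : ((a+i).factorial : ℚ) ≠ 0 := by positivity
  have n9 : ((e+i+1 : ℚ)) ≠ 0 := by positivity
  have n10 : ((e+i+2 : ℚ)) ≠ 0 := by positivity
  field_simp

/-- peel one factor of `i` (with an extra weight `w`). -/
private lemma peel1w (c n b N : ℕ) (hc : 1 ≤ c) (w : ℕ → ℚ) :
    ∑ i ∈ range (N+1), (-1:ℚ)^i * (c.choose i : ℚ) * ((b-i).choose n : ℚ) * i * w i
      = -(c:ℚ) * ∑ j ∈ range N,
          (-1:ℚ)^j * ((c-1).choose j : ℚ) * ((b-1-j).choose n : ℚ) * w (j+1) := by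
  rw [Finset.sum_range_succ'
    (fun i => (-1:ℚ)^i * (c.choose i : ℚ) * ((b-i).choose n : ℚ) * i * w i) N]
  have key : ∀ j ∈ range N,
      (-1:ℚ)^(j+1) * (c.choose (j+1) : ℚ) * ((b-(j+1)).choose n : ℚ) * ((j+1 : ℕ) : ℚ) * w (j+1)
        = -(c:ℚ) * ((-1:ℚ)^j * ((c-1).choose j : ℚ) * ((b-1-j).choose n : ℚ) * w (j+1)) := by
    intro j _
    have h1 : b - (j+1) = b - 1 - j := by omega
    have h2 : c * (c-1).choose j = c.choose (j+1) * (j+1) := by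
      have := Nat.add_one_mul_choose_eq (c-1) j
      rwa [Nat.sub_add_cancel hc] at this
    have h2q : (c:ℚ) * (((c-1).choose j : ℕ) : ℚ) = ((c.choose (j+1) : ℕ) : ℚ) * ((j+1 : ℕ) : ℚ) := by
      exact_mod_cast congrArg (fun x : ℕ => (x : ℚ)) h2
    rw [h1]
    push_cast at h2q ⊢
    linear_combination ((-1:ℚ)^j * (((b-1-j).choose n : ℕ) : ℚ) * w (j+1)) * h2q
  rw [Finset.sum_congr rfl key, ← Finset.mul_sum]
  push_cast
  ring

/-- peel one factor of `i`. -/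
private lemma peel1 (c n b N : ℕ) (hc : 1 ≤ c) :
    ∑ i ∈ range (N+1), (-1:ℚ)^i * (c.choose i : ℚ) * ((b-i).choose n : ℚ) * i
      = -(c:ℚ) * ∑ j ∈ range N,
          (-1:ℚ)^j * ((c-1).choose j : ℚ) * ((b-1-j).choose n : ℚ) := by
  have := peel1w c n b N hc (fun _ => 1)
  simpa using this

/-- The alternating-sum identity defining `f(t,c)` in Kleppe–Miró-Roig. -/
theorem alternating_sum_f (t c : ℕ) (ht : 2 ≤ t) (hc : 2 ≤ c) :
    ∑ i ∈ Finset.range t, (-1 : ℚ) ^ i * ((t + c - 1).choose (t - i - 1)) *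
        ((t + c - 1 - i).choose (t - 1)) * ((c + 2 + i).choose i) =
      (4 + 12 * (c : ℚ) + 8 * c ^ 2 - 5 * c * t - 7 * c ^ 2 * t - c * t ^ 2 + c ^ 2 * t ^ 2) *
        ((c + t - 1).factorial) / (2 * ((2 + c).factorial) * ((t - 1).factorial)) := by
  obtain ⟨t', rfl⟩ : ∃ t', t = t' + 2 := ⟨t - 2, by omega⟩
  obtain ⟨c', rfl⟩ : ∃ c', c = c' + 2 := ⟨c - 2, by omega⟩
  clear ht hc
  -- Step 1: per-term transformation
  have step1 : ∀ i ∈ range (t'+2),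
      (-1 : ℚ) ^ i * ((t'+2 + (c'+2) - 1).choose (t'+2 - i - 1) : ℚ) *
          ((t'+2 + (c'+2) - 1 - i).choose (t'+2 - 1) : ℚ) * ((c'+2 + 2 + i).choose i : ℚ)
        = ((t'+2 + (c'+2) - 1).choose (t'+2 - 1) : ℚ) / ((((c'+2 : ℕ)):ℚ)+1)/(((c'+2 : ℕ):ℚ)+2) *
            ((-1 : ℚ) ^ i * ((c'+2).choose i : ℚ) * ((t'+2 + (c'+2) - 1 - i).choose (c'+2) : ℚ) *
              ((((c'+2 : ℕ):ℚ)+i+1)*(((c'+2 : ℕ):ℚ)+i+2))) := by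
    intro i hi
    simp only [Finset.mem_range] at hi
    by_cases hic : i ≤ c' + 2
    · obtain ⟨a, ha⟩ : ∃ a, t' + 2 = a + i + 1 := ⟨t' + 2 - i - 1, by omega⟩
      obtain ⟨e, he⟩ : ∃ e, c' + 2 = e + i := ⟨c' + 2 - i, by omega⟩
      rw [show t'+2 + (c'+2) - 1 - i = a+e+i by omega,
          show t'+2 - i - 1 = a by omega,
          show t'+2 + (c'+2) - 1 = a+e+2*i by omega,
          show t'+2 - 1 = a + i by omega,
          show c'+2 + 2 + i = e+2*i+2 by omega,
          he]
      have := termQ a e i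
      push_cast at this ⊢
      have hei : ((e : ℚ) + i + 1) ≠ 0 := by positivity
      have hei2 : ((e : ℚ) + i + 2) ≠ 0 := by positivity
      field_simp at this ⊢
      linear_combination this
    · have z1 : (t'+2 + (c'+2) - 1 - i).choose (t'+2 - 1) = 0 :=
        Nat.choose_eq_zero_of_lt (by omega)
      have z2 : (c'+2).choose i = 0 := Nat.choose_eq_zero_of_lt (by omega)
      rw [z1, z2]
      simp
  rw [Finset.sum_congr rfl step1, ← Finset.mul_sum]
  -- Step 2: expand the quadratic weight
  have expand : ∀ i ∈ range (t'+2),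
      (-1 : ℚ) ^ i * ((c'+2).choose i : ℚ) * ((t'+2 + (c'+2) - 1 - i).choose (c'+2) : ℚ) *
          ((((c'+2 : ℕ):ℚ)+i+1)*(((c'+2 : ℕ):ℚ)+i+2))
        = ((((c'+2 : ℕ):ℚ)+1)*(((c'+2 : ℕ):ℚ)+2)) *
            ((-1:ℚ)^i * ((c'+2).choose i : ℚ) * ((t'+2 + (c'+2) - 1 - i).choose (c'+2) : ℚ))
          + (2*(((c'+2 : ℕ)):ℚ)+4) *
            ((-1:ℚ)^i * ((c'+2).choose i : ℚ) * ((t'+2 + (c'+2) - 1 - i).choose (c'+2) : ℚ) * i)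
          + ((-1:ℚ)^i * ((c'+2).choose i : ℚ) * ((t'+2 + (c'+2) - 1 - i).choose (c'+2) : ℚ) * i
              * ((i:ℚ) - 1)) := by
    intro i _
    push_cast
    ring
  rw [Finset.sum_congr rfl expand, Finset.sum_add_distrib, Finset.sum_add_distrib,
      ← Finset.mul_sum, ← Finset.mul_sum]
  -- Step 3: evaluate the three sums
  have hS0 : ∑ i ∈ range (t'+2),
      (-1:ℚ)^i * ((c'+2).choose i : ℚ) * ((t'+2 + (c'+2) - 1 - i).choose (c'+2) : ℚ) = 1 := by
    rw [altV' (c'+2) (c'+2) (t'+2 + (c'+2) - 1) (t'+2) (by omega) (by omega) (by omega)]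
    rw [show t'+2 + (c'+2) - 1 - (c'+2) = t'+1 by omega, show c'+2 - (c'+2) = 0 by omega]
    simp
  have hS1 : ∑ i ∈ range (t'+2),
      (-1:ℚ)^i * ((c'+2).choose i : ℚ) * ((t'+2 + (c'+2) - 1 - i).choose (c'+2) : ℚ) * i
        = -(((c'+2 : ℕ)):ℚ) * ((t'+1 : ℕ) : ℚ) := by
    rw [show t'+2 = (t'+1)+1 by omega]
    rw [peel1 (c'+2) (c'+2) ((t'+1)+1 + (c'+2) - 1) (t'+1) (by omega)]
    rw [show (c'+2) - 1 = c'+1 by omega]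
    rw [altV' (c'+1) (c'+2) ((t'+1)+1 + (c'+2) - 1 - 1) (t'+1) (by omega) (by omega) (by omega)]
    rw [show (t'+1)+1 + (c'+2) - 1 - 1 - (c'+1) = t'+1 by omega,
        show (c'+2) - (c'+1) = 1 by omega]
    simp [Nat.choose_one_right]
  have hS2 : ∑ i ∈ range (t'+2),
      (-1:ℚ)^i * ((c'+2).choose i : ℚ) * ((t'+2 + (c'+2) - 1 - i).choose (c'+2) : ℚ) * i
          * ((i:ℚ) - 1)
        = ((c'+2 : ℕ) : ℚ) * ((c'+1 : ℕ) : ℚ) * ((t'+1 : ℕ) : ℚ) * (t' : ℚ) / 2 := by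
    rw [show t'+2 = (t'+1)+1 by omega]
    rw [peel1w (c'+2) (c'+2) ((t'+1)+1 + (c'+2) - 1) (t'+1) (by omega) (fun i => (i:ℚ) - 1)]
    have fix : ∀ j ∈ range (t'+1),
        (-1:ℚ)^j * (((c'+2) - 1).choose j : ℚ) * (((t'+1)+1 + (c'+2) - 1 - 1 - j).choose (c'+2) : ℚ)
            * (((j+1 : ℕ) : ℚ) - 1)
          = (-1:ℚ)^j * ((c'+1).choose j : ℚ) * (((t'+1)+1 + (c'+2) - 1 - 1 - j).choose (c'+2) : ℚ) * j := by
      intro j _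
      rw [show (c'+2) - 1 = c'+1 by omega]
      push_cast
      ring
    rw [Finset.sum_congr rfl fix]
    rw [peel1 (c'+1) (c'+2) ((t'+1)+1 + (c'+2) - 1 - 1) t' (by omega)]
    rw [show (c'+1) - 1 = c' by omega]
    rw [altV' c' (c'+2) ((t'+1)+1 + (c'+2) - 1 - 1 - 1) t' (by omega) (by omega) (by omega)]
    rw [show (t'+1)+1 + (c'+2) - 1 - 1 - 1 - c' = t'+1 by omega,
        show (c'+2) - c' = 2 by omega]
    rw [Nat.cast_choose_two]
    push_cast
    ring
  rw [hS0, hS1, hS2]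
  -- Step 4: final algebra
  rw [show t'+2 + (c'+2) - 1 = t'+c'+3 by omega,
      show c'+2 + (t'+2) - 1 = t'+c'+3 by omega,
      show 2 + (c'+2) = c'+4 by omega,
      show t'+2 - 1 = t'+1 by omega]
  have hC : (((t'+c'+3).choose (t'+1) : ℕ) : ℚ)
      = ((t'+c'+3).factorial : ℚ) / (((t'+1).factorial : ℚ) * ((c'+2).factorial : ℚ)) := by
    have := Nat.cast_choose (K := ℚ) (show t'+1 ≤ t'+c'+3 by omega)
    rw [show t'+c'+3 - (t'+1) = c'+2 by omega] at this
    exact this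
  rw [hC]
  have f4 : ((c'+4).factorial : ℚ) = (c'+4) * (c'+3) * ((c'+2).factorial : ℚ) := by
    rw [show c'+4 = (c'+3)+1 by ring, Nat.factorial_succ, Nat.factorial_succ]
    push_cast; ring
  rw [f4]
  have n1 : ((t'+c'+3).factorial : ℚ) ≠ 0 := by positivity
  have n2 : ((t'+1).factorial : ℚ) ≠ 0 := by positivity
  have n3 : ((c'+2).factorial : ℚ) ≠ 0 := by positivity
  have n4 : ((c' : ℚ) + 3) ≠ 0 := by positivity
  have n5 : ((c' : ℚ) + 4) ≠ 0 := by positivity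
  push_cast
  field_simp
  ring
end

section
/- For all integers t ≥ 2 and c ≥ 2, the alternating sum ∑_{i=1}^{t-1} (-1)^i * C(t+c-1, t-i-1) * C(t+c-1-i, t-1) * C(c+1+i, i-1) equals c * (-2 - 4c - t + ct) * (c+t-1)! / (2 * (2+c)! * (t-2)!). -/
/-- Linear coefficient polynomial `A(t,c) = ct - 4c - t - 2`. -/
def AA (t c : ℚ) : ℚ := c*t - 4*c - t - 2

/-- Zeilberger certificate numerator polynomial. -/
def pp (t c i : ℚ) : ℚ :=
  (2*c^2+6*c^3+4*c^4 + t*(4*c+14*c^2+10*c^3-c^4) + t^2*(2+10*c+8*c^2-2*c^3) + t^3*(2+2*c-c^2))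
  + (-(2*c+7*c^2+8*c^3+4*c^4) + t*(-2-10*c-15*c^2-10*c^3+c^4) + t^2*(-3-8*c-9*c^2+2*c^3) + t^3*(-1-3*c+c^2))*i
  + ((c+3*c^2+2*c^3) + t*(1+3*c+2*c^2) + t^2*(-c+c^2) + t^3*(-1+c))*i^2
  + ((c+2*c^2) + t*(1+3*c-c^2) + t^2*(1-c))*i^3

lemma pp_one (t c : ℚ) : pp t c 1 = 0 := by simp only [pp]; ring

lemma rat1 (n k : ℕ) : (((n+1).choose (k+1) : ℕ) : ℚ) * ((k:ℚ)+1) = (n.choose k : ℚ) * ((n:ℚ)+1) := by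
  have h := Nat.add_one_mul_choose_eq n k
  have h2 : (((n+1).choose (k+1) : ℕ) : ℚ) * ((k:ℚ)+1) = ((n+1):ℚ) * (n.choose k : ℚ) := by
    exact_mod_cast h.symm
  linarith [h2]

lemma rat2 (n k : ℕ) : ((n.choose (k+1) : ℕ) : ℚ) * ((k:ℚ)+1) = (n.choose k : ℚ) * ((n:ℚ) - (k:ℚ)) := by
  rcases le_or_gt k n with h | h
  · have h2 := Nat.choose_succ_right_eq n k
    have h3 : ((n - k : ℕ) : ℚ) = (n:ℚ) - (k:ℚ) := by rw [Nat.cast_sub h]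
    rw [← h3]; exact_mod_cast h2
  · rw [Nat.choose_eq_zero_of_lt h, Nat.choose_eq_zero_of_lt (by omega)]; simp

lemma rat3 (n k : ℕ) : (((n+1).choose k : ℕ) : ℚ) * ((n:ℚ)+1 - (k:ℚ)) = (n.choose k : ℚ) * ((n:ℚ)+1) := by
  rcases le_or_gt k (n+1) with h | h
  · have h2 := Nat.choose_mul_succ_eq n k
    have h3 : ((n + 1 - k : ℕ) : ℚ) = (n:ℚ) + 1 - (k:ℚ) := by rw [Nat.cast_sub h]; push_cast; ring
    rw [← h3]; exact_mod_cast h2.symm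
  · rw [Nat.choose_eq_zero_of_lt h, Nat.choose_eq_zero_of_lt (by omega)]; simp

lemma rat4 (n k : ℕ) : (((n+1).choose (k+1) : ℕ) : ℚ) = (n.choose k : ℚ) + (n.choose (k+1) : ℚ) := by
  exact_mod_cast Nat.choose_succ_succ n k

/-- The Zeilberger certificate identity (generic interior term). -/
lemma step_term (c j k : ℕ) :
    (((j:ℚ)+k+3) * AA ((j:ℚ)+k+4) c * ((c:ℚ)+(j:ℚ)+k+3)) *
        ((-1:ℚ)^(j+1) * ((j+k+c+2).choose (k+1) : ℚ) * ((k+c+1).choose (j+k+2) : ℚ) * ((c+j+2).choose j : ℚ))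
      - (((j:ℚ)+k+3) * AA ((j:ℚ)+k+3) c * ((j:ℚ)+k+2)) *
        ((-1:ℚ)^(j+1) * ((j+k+c+3).choose (k+2) : ℚ) * ((k+c+2).choose (j+k+3) : ℚ) * ((c+j+2).choose j : ℚ))
      = pp ((j:ℚ)+k+3) c ((j:ℚ)+2) * (-1:ℚ)^(j+2) * ((j+k+c+2).choose k : ℚ) * ((k+c).choose (j+k+2) : ℚ) *
          ((c+j+3).choose (j+1) : ℚ) / (((c:ℚ)+(j:ℚ)+3)*((k:ℚ)+1))
      - pp ((j:ℚ)+k+3) c ((j:ℚ)+1) * (-1:ℚ)^(j+1) * ((j+k+c+2).choose (k+1) : ℚ) * ((k+c+1).choose (j+k+2) : ℚ) *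
          ((c+j+2).choose j : ℚ) / (((c:ℚ)+(j:ℚ)+2)*((k:ℚ)+2)) := by
  have d1 : ((k:ℚ)+2) ≠ 0 := by positivity
  have d2 : ((j:ℚ)+k+3) ≠ 0 := by positivity
  have d3 : ((c:ℚ)+(j:ℚ)+2) ≠ 0 := by positivity
  have d4 : ((k:ℚ)+(c:ℚ)+1) ≠ 0 := by positivity
  have d5 : ((j:ℚ)+1) ≠ 0 := by positivity
  have d6 : ((c:ℚ)+(j:ℚ)+3) ≠ 0 := by positivity
  have d7 : ((k:ℚ)+1) ≠ 0 := by positivity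
  have hX : ((j+k+c+3).choose (k+2) : ℚ) = ((j+k+c+2).choose (k+1) : ℚ) * ((j:ℚ)+(k:ℚ)+(c:ℚ)+3) / ((k:ℚ)+2) := by
    have h := rat1 (j+k+c+2) (k+1)
    rw [show j+k+c+2+1 = j+k+c+3 by omega, show k+1+1 = k+2 by omega] at h
    push_cast at h
    field_simp
    linarith [h]
  have hY : ((k+c+2).choose (j+k+3) : ℚ) = ((k+c+1).choose (j+k+2) : ℚ) * ((k:ℚ)+(c:ℚ)+2) / ((j:ℚ)+(k:ℚ)+3) := by
    have h := rat1 (k+c+1) (j+k+2)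
    rw [show k+c+1+1 = k+c+2 by omega, show j+k+2+1 = j+k+3 by omega] at h
    push_cast at h
    field_simp
    linarith [h]
  have hx : ((j+k+c+2).choose k : ℚ) = ((j+k+c+2).choose (k+1) : ℚ) * ((k:ℚ)+1) / ((c:ℚ)+(j:ℚ)+2) := by
    have h := rat2 (j+k+c+2) k
    push_cast at h
    field_simp
    linarith [h]
  have hy : ((k+c).choose (j+k+2) : ℚ) = ((k+c+1).choose (j+k+2) : ℚ) * ((c:ℚ)-(j:ℚ)-1) / ((k:ℚ)+(c:ℚ)+1) := by
    have h := rat3 (k+c) (j+k+2)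
    push_cast at h
    field_simp
    linarith [h]
  have hz : ((c+j+3).choose (j+1) : ℚ) = ((c+j+2).choose j : ℚ) * ((c:ℚ)+(j:ℚ)+3) / ((j:ℚ)+1) := by
    have h := rat1 (c+j+2) j
    rw [show c+j+2+1 = c+j+3 by omega] at h
    push_cast at h
    field_simp
    linarith [h]
  have hs : (-1:ℚ)^(j+2) = -((-1:ℚ)^(j+1)) := by
    rw [show j+2 = (j+1)+1 by omega, pow_succ]; ring
  rw [hX, hY, hx, hy, hz, hs]
  simp only [AA, pp]
  field_simp
  ring

/-- The boundary identity at the top end of the telescoping sum. -/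
lemma boundary (c m : ℕ) :
    (((m:ℚ)+2) * AA ((m:ℚ)+3) c * ((c:ℚ)+(m:ℚ)+2)) *
        ((-1:ℚ)^(m+1) * (c.choose (m+1) : ℚ) * ((c+m+2).choose m : ℚ))
      - (((m:ℚ)+2) * AA ((m:ℚ)+2) c * ((m:ℚ)+1)) *
        ((-1:ℚ)^(m+1) * ((m:ℚ)+(c:ℚ)+2) * ((c+1).choose (m+2) : ℚ) * ((c+m+2).choose m : ℚ))
      - (((m:ℚ)+2) * AA ((m:ℚ)+2) c * ((m:ℚ)+1)) *
        ((-1:ℚ)^(m+2) * (c.choose (m+2) : ℚ) * ((c+m+3).choose (m+1) : ℚ))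
      = -(pp ((m:ℚ)+2) c ((m:ℚ)+1) * (-1:ℚ)^(m+1) * (c.choose (m+1) : ℚ) * ((c+m+2).choose m : ℚ) /
          (((c:ℚ)+(m:ℚ)+2))) := by
  have d1 : ((m:ℚ)+1) ≠ 0 := by positivity
  have d2 : ((m:ℚ)+2) ≠ 0 := by positivity
  have d3 : ((c:ℚ)+(m:ℚ)+2) ≠ 0 := by positivity
  have hu1 : (((c+1)).choose (m+2) : ℚ) = (c.choose (m+1) : ℚ) + (c.choose (m+2) : ℚ) := by
    have h := rat4 c (m+1)
    rw [show m+1+1 = m+2 by omega] at h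
    exact h
  have hb : ((c+m+3).choose (m+1) : ℚ) = ((c+m+2).choose m : ℚ) + ((c+m+2).choose (m+1) : ℚ) := by
    have h := rat4 (c+m+2) m
    rw [show c+m+2+1 = c+m+3 by omega] at h
    exact h
  have ha2 : ((c+m+2).choose (m+1) : ℚ) = ((c+m+2).choose m : ℚ) * ((c:ℚ)+2) / ((m:ℚ)+1) := by
    have h := rat2 (c+m+2) m
    push_cast at h
    field_simp
    linarith [h]
  have hv : (c.choose (m+2) : ℚ) = (c.choose (m+1) : ℚ) * ((c:ℚ)-(m:ℚ)-1) / ((m:ℚ)+2) := by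
    have h := rat2 c (m+1)
    rw [show m+1+1 = m+2 by omega] at h
    push_cast at h
    field_simp
    linarith [h]
  have hs : (-1:ℚ)^(m+2) = -((-1:ℚ)^(m+1)) := by
    rw [show m+2 = (m+1)+1 by omega, pow_succ]; ring
  rw [hu1, hb, ha2, hv, hs]
  simp only [AA, pp]
  field_simp
  ring

set_option maxHeartbeats 1000000 in
/-- The alternating-sum identity defining `g(t,c)` in Kleppe–Miró-Roig. -/
theorem alternating_sum_g (t c : ℕ) (ht : 2 ≤ t) (hc : 2 ≤ c) :
    ∑ i ∈ Finset.Icc 1 (t - 1), (-1 : ℚ) ^ i * ((t + c - 1).choose (t - i - 1)) *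
        ((t + c - 1 - i).choose (t - 1)) * ((c + 1 + i).choose (i - 1)) =
      (c : ℚ) * (-2 - 4 * c - t + c * t) *
        ((c + t - 1).factorial) / (2 * ((2 + c).factorial) * ((t - 2).factorial)) := by
  induction t, ht using Nat.le_induction with
  | base =>
    have h1 : Finset.Icc 1 (2-1) = ({1} : Finset ℕ) := by decide
    rw [h1, Finset.sum_singleton]
    simp only [show 2-1-1 = 0 by omega, show 2+c-1-1 = c by omega, show 2+c-1 = c+1 by omega,
        show 2-1 = 1 by omega, show c+1+1 = c+2 by omega, show 1-1 = 0 by omega,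
        show c+2-1 = c+1 by omega, show 2-2 = 0 by omega]
    rw [Nat.choose_zero_right, Nat.choose_one_right, Nat.choose_zero_right, Nat.factorial_zero]
    have hfact1 : (((c+1).factorial : ℕ) : ℚ) = ((c:ℚ)+1)*((c.factorial : ℕ) : ℚ) := by
      rw [Nat.factorial_succ]
      push_cast
      ring
    rw [hfact1]
    have hfact : (((2+c).factorial : ℕ) : ℚ) = ((c:ℚ)+2)*((c:ℚ)+1)*((c.factorial : ℕ) : ℚ) := by
      rw [show (2:ℕ)+c = (c+1)+1 by omega, Nat.factorial_succ, Nat.factorial_succ]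
      push_cast
      ring
    rw [hfact]
    have hf : ((c.factorial : ℕ) : ℚ) ≠ 0 := by positivity
    have hc2 : ((c:ℚ)+2) ≠ 0 := by positivity
    have hc1 : ((c:ℚ)+1) ≠ 0 := by positivity
    push_cast
    field_simp
    ring
  | succ t ht IH =>
    by_cases hA : AA (t:ℚ) (c:ℚ) = 0
    · -- degenerate cases: A(t) = 0 forces (t,c) ∈ {(5,7),(6,4),(7,3),(10,2)}
      simp only [AA] at hA
      have hcq : (2:ℚ) ≤ (c:ℚ) := by exact_mod_cast hc
      have htq : (2:ℚ) ≤ (t:ℚ) := by exact_mod_cast ht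
      have ht10q : (t:ℚ) ≤ 10 := by
        by_contra hcon
        push_neg at hcon
        nlinarith [mul_nonneg (by linarith : (0:ℚ) ≤ (c:ℚ)-2) (by linarith : (0:ℚ) ≤ (t:ℚ)-4)]
      have ht10 : t ≤ 10 := by exact_mod_cast ht10q
      have hnatq : ((c*t : ℕ) : ℚ) = ((4*c+t+2 : ℕ) : ℚ) := by push_cast; linarith
      have hnat : c*t = 4*c+t+2 := by exact_mod_cast hnatq
      interval_cases t
      · omega
      · omega
      · omega
      · have h7 : c = 7 := by omega
        subst h7
        norm_num [show (Finset.Icc 1 5 : Finset ℕ) = {1,2,3,4,5} from rfl, Nat.choose, Nat.factorial]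
      · have h4 : c = 4 := by omega
        subst h4
        norm_num [show (Finset.Icc 1 6 : Finset ℕ) = {1,2,3,4,5,6} from rfl, Nat.choose, Nat.factorial]
      · have h3 : c = 3 := by omega
        subst h3
        norm_num [show (Finset.Icc 1 7 : Finset ℕ) = {1,2,3,4,5,6,7} from rfl, Nat.choose, Nat.factorial]
      · omega
      · omega
      · have h2 : c = 2 := by omega
        subst h2
        norm_num [show (Finset.Icc 1 10 : Finset ℕ) = {1,2,3,4,5,6,7,8,9,10} from rfl, Nat.choose, Nat.factorial]
    · -- generic case: use the first-order Zeilberger recurrence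
      obtain ⟨m, rfl⟩ : ∃ m, t = m + 2 := ⟨t - 2, by omega⟩
      push_cast at hA
      set F1 : ℕ → ℚ := fun j => (-1:ℚ)^(j+1) * ((m+c+1).choose (m-j) : ℚ) *
        ((m+c-j).choose (m+1) : ℚ) * ((c+j+2).choose j : ℚ) with hF1
      set F2 : ℕ → ℚ := fun j => (-1:ℚ)^(j+1) * ((m+c+2).choose (m+1-j) : ℚ) *
        ((m+c+1-j).choose (m+2) : ℚ) * ((c+j+2).choose j : ℚ) with hF2
      set G : ℕ → ℚ := fun j => pp ((m:ℚ)+2) c ((j:ℚ)+1) * (-1:ℚ)^(j+1) * ((m+c+1).choose (m-j) : ℚ) *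
        ((m+c-j).choose (m+1) : ℚ) * ((c+j+2).choose j : ℚ) / (((c:ℚ)+(j:ℚ)+2) * ((m+1-j : ℕ) : ℚ)) with hG
      set α : ℚ := ((m:ℚ)+2) * AA ((m:ℚ)+3) c * ((c:ℚ)+(m:ℚ)+2) with hα
      set β : ℚ := ((m:ℚ)+2) * AA ((m:ℚ)+2) c * ((m:ℚ)+1) with hβ
      -- rewrite the induction hypothesis sum
      have hS1 : ∑ i ∈ Finset.Icc 1 (m+2-1), (-1 : ℚ) ^ i * ((m+2+c-1).choose (m+2-i-1) : ℚ) *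
          ((m+2+c-1-i).choose (m+2-1) : ℚ) * ((c+1+i).choose (i-1) : ℚ)
          = ∑ j ∈ Finset.range (m+1), F1 j := by
        rw [show m+2-1 = m+1 by omega, ← Finset.Ico_add_one_right_eq_Icc, Finset.sum_Ico_eq_sum_range]
        rw [show m+1+1-1 = m+1 by omega]
        refine Finset.sum_congr rfl fun j hj => ?_
        simp only [hF1]
        rw [show m+2-(1+j)-1 = m-j by omega, show m+2+c-1-(1+j) = m+c-j by omega,
            show m+2+c-1 = m+c+1 by omega,
            show c+1+(1+j) = c+j+2 by omega, show (1+j)-1 = j by omega,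
            show 1+j = j+1 by omega]
      -- rewrite the goal sum
      have hS2 : ∑ i ∈ Finset.Icc 1 (m+2+1-1), (-1 : ℚ) ^ i * ((m+2+1+c-1).choose (m+2+1-i-1) : ℚ) *
          ((m+2+1+c-1-i).choose (m+2+1-1) : ℚ) * ((c+1+i).choose (i-1) : ℚ)
          = ∑ j ∈ Finset.range (m+2), F2 j := by
        rw [show m+2+1-1 = m+2 by omega, ← Finset.Ico_add_one_right_eq_Icc, Finset.sum_Ico_eq_sum_range]
        rw [show m+2+1-1 = m+2 by omega]
        refine Finset.sum_congr rfl fun j hj => ?_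
        simp only [hF2]
        rw [show m+2+1-(1+j)-1 = m+1-j by omega, show m+2+1+c-1-(1+j) = m+c+1-j by omega,
            show m+2+1+c-1 = m+c+2 by omega,
            show c+1+(1+j) = c+j+2 by omega, show (1+j)-1 = j by omega,
            show 1+j = j+1 by omega]
      -- telescoping identity on the interior terms
      have htel : ∀ j ∈ Finset.range m, α * F1 j - β * F2 j = G (j+1) - G j := by
        intro j hj
        have hjm : j < m := Finset.mem_range.mp hj
        obtain ⟨k, rfl⟩ : ∃ k, m = j + k + 1 := ⟨m - j - 1, by omega⟩
        simp only [hF1, hF2, hG, hα, hβ]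
        rw [show j+k+1+c+1-j = k+c+2 by omega, show j+k+1+1-(j+1) = k+1 by omega,
            show j+k+1+1-j = k+2 by omega, show j+k+1-(j+1) = k by omega,
            show j+k+1-j = k+1 by omega, show j+k+1+c-(j+1) = k+c by omega,
            show j+k+1+c-j = k+c+1 by omega,
            show j+k+1+c+1 = j+k+c+2 by omega, show j+k+1+c+2 = j+k+c+3 by omega,
            show j+k+1+2 = j+k+3 by omega, show j+k+1+1 = j+k+2 by omega,
            show c+(j+1)+2 = c+j+3 by omega, show j+1+1 = j+2 by omega]
        have hst := step_term c j k
        simp only [AA, pp] at hst ⊢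
        push_cast
        linear_combination hst
      have hsum : ∑ j ∈ Finset.range m, (α * F1 j - β * F2 j) = G m - G 0 := by
        rw [Finset.sum_congr rfl htel]
        exact Finset.sum_range_sub G m
      have hG0 : G 0 = 0 := by
        simp only [hG]
        simp only [Nat.cast_zero, zero_add, pp_one]
        norm_num
      have hFm1 : F1 m = (-1:ℚ)^(m+1) * (c.choose (m+1) : ℚ) * ((c+m+2).choose m : ℚ) := by
        simp only [hF1]
        rw [show m-m = 0 by omega, show m+c-m = c by omega, Nat.choose_zero_right]
        push_cast
        ring
      have hFm2 : F2 m = (-1:ℚ)^(m+1) * ((m:ℚ)+(c:ℚ)+2) * ((c+1).choose (m+2) : ℚ) *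
          ((c+m+2).choose m : ℚ) := by
        simp only [hF2]
        rw [show m+1-m = 1 by omega, show m+c+1-m = c+1 by omega, Nat.choose_one_right]
        push_cast
        ring
      have hFm3 : F2 (m+1) = (-1:ℚ)^(m+2) * (c.choose (m+2) : ℚ) * ((c+m+3).choose (m+1) : ℚ) := by
        simp only [hF2]
        rw [show m+1-(m+1) = 0 by omega, show m+c+1-(m+1) = c by omega,
            show c+(m+1)+2 = c+m+3 by omega, show m+1+1 = m+2 by omega, Nat.choose_zero_right]
        push_cast
        ring
      have hGm : G m = pp ((m:ℚ)+2) c ((m:ℚ)+1) * (-1:ℚ)^(m+1) * (c.choose (m+1) : ℚ) *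
          ((c+m+2).choose m : ℚ) / (((c:ℚ)+(m:ℚ)+2)) := by
        simp only [hG]
        rw [show m-m = 0 by omega, show m+c-m = c by omega, show m+1-m = 1 by omega,
            Nat.choose_zero_right]
        push_cast
        ring
      have e2 : α * F1 m - β * F2 m - β * F2 (m+1) = -(G m) := by
        rw [hFm1, hFm2, hFm3, hGm, hα, hβ]
        exact boundary c m
      have e3 : α * (∑ j ∈ Finset.range (m+1), F1 j) - β * (∑ j ∈ Finset.range (m+2), F2 j) = 0 := by
        rw [Finset.sum_range_succ F2 (m+1), Finset.sum_range_succ F2 m, Finset.sum_range_succ F1 m]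
        have e1 : α * ((∑ j ∈ Finset.range m, F1 j) + F1 m)
            - β * (((∑ j ∈ Finset.range m, F2 j) + F2 m) + F2 (m+1))
            = (∑ j ∈ Finset.range m, (α * F1 j - β * F2 j))
              + (α * F1 m - β * F2 m - β * F2 (m+1)) := by
          rw [Finset.sum_sub_distrib, ← Finset.mul_sum, ← Finset.mul_sum]
          ring
        rw [e1, hsum, hG0, e2]
        ring
      -- assemble
      rw [hS2]
      rw [hS1] at IH
      rw [show c+(m+2)-1 = c+m+1 by omega, show m+2-2 = m by omega] at IH
      have hβne : β ≠ 0 := by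
        rw [hβ]
        have h1 : ((m:ℚ)+2) ≠ 0 := by positivity
        have h2 : ((m:ℚ)+1) ≠ 0 := by positivity
        exact mul_ne_zero (mul_ne_zero h1 hA) h2
      rw [show c+(m+2+1)-1 = c+m+2 by omega, show m+2+1-2 = m+1 by omega]
      refine mul_left_cancel₀ hβne ?_
      have e4 : β * (∑ j ∈ Finset.range (m+2), F2 j) = α * (∑ j ∈ Finset.range (m+1), F1 j) := by
        linarith [e3]
      rw [e4, IH]
      have h4 : (((c+m+2).factorial : ℕ) : ℚ) = ((c:ℚ)+(m:ℚ)+2) * (((c+m+1).factorial : ℕ) : ℚ) := by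
        rw [show c+m+2 = (c+m+1)+1 by omega, Nat.factorial_succ]
        push_cast
        ring
      have h5 : (((m+1).factorial : ℕ) : ℚ) = ((m:ℚ)+1) * ((m.factorial : ℕ) : ℚ) := by
        rw [Nat.factorial_succ]
        push_cast
        ring
      rw [h4, h5, hα, hβ]
      have hf1 : (((c+m+1).factorial : ℕ) : ℚ) ≠ 0 := by positivity
      have hf2 : (((2+c).factorial : ℕ) : ℚ) ≠ 0 := by positivity
      have hf3 : ((m.factorial : ℕ) : ℚ) ≠ 0 := by positivity
      have h1 : ((m:ℚ)+2) ≠ 0 := by positivity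
      have h2 : ((m:ℚ)+1) ≠ 0 := by positivity
      simp only [AA]
      push_cast
      field_simp
      ring
end

section
/- For all integers t ≥ 3 and c ≥ 2, the alternating sum ∑_{i=2}^{t-1} (-1)^i * C(t+c-1, t-i-1) * C(t+c-1-i, t-1) * C(c+i, i-2) equals (c² - c) * (c+t-1)! / (2 * (2+c)! * (t-3)!). -/
/-- Finite-difference identity: `∑ (-1)^k C(m,k) C(m+b-k, m+d) = C(b,d)`. -/
lemma aux_fin_diff (m : ℕ) : ∀ b d : ℕ,
    ∑ k ∈ Finset.range (m + 1), (-1 : ℚ) ^ k * (m.choose k) * ((m + b - k).choose (m + d))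
      = b.choose d := by
  induction m with
  | zero => intro b d; simp
  | succ m ih =>
    intro b d
    rw [Finset.sum_range_succ']
    have step : ∀ k ∈ Finset.range (m + 1),
        (-1 : ℚ) ^ (k + 1) * ((m + 1).choose (k + 1)) *
            ((m + 1 + b - (k + 1)).choose (m + 1 + d))
          = ((-1 : ℚ) ^ (k + 1) * (m.choose (k + 1)) *
              ((m + 1 + b - (k + 1)).choose (m + 1 + d)))
            - ((-1 : ℚ) ^ k * (m.choose k) * ((m + b - k).choose (m + (d + 1)))) := by
      intro k _
      have e1 : m + 1 + b - (k + 1) = m + b - k := by omega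
      have e2 : m + 1 + d = m + (d + 1) := by omega
      rw [Nat.choose_succ_succ]
      rw [e1, e2]
      push_cast
      ring
    rw [Finset.sum_congr rfl step, Finset.sum_sub_distrib, ih b (d + 1)]
    have hA : ∑ k ∈ Finset.range (m + 2),
        (-1 : ℚ) ^ k * (m.choose k) * ((m + 1 + b - k).choose (m + 1 + d))
        = (b + 1).choose (d + 1) := by
      rw [Finset.sum_range_succ]
      have hz : (m.choose (m + 1) : ℚ) = 0 := by
        exact_mod_cast congrArg (Nat.cast (R := ℚ)) (Nat.choose_eq_zero_of_lt (by omega))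
      rw [hz, mul_zero, zero_mul, add_zero]
      have hre : ∀ k ∈ Finset.range (m + 1),
          (-1 : ℚ) ^ k * (m.choose k) * ((m + 1 + b - k).choose (m + 1 + d))
          = (-1 : ℚ) ^ k * (m.choose k) * ((m + (b + 1) - k).choose (m + (d + 1))) := by
        intro k _
        have e1 : m + 1 + b = m + (b + 1) := by omega
        have e2 : m + 1 + d = m + (d + 1) := by omega
        rw [e1, e2]
      rw [Finset.sum_congr rfl hre, ih (b + 1) (d + 1)]
    rw [Finset.sum_range_succ'] at hA
    have hp : ((b + 1).choose (d + 1) : ℚ) = b.choose d + b.choose (d + 1) := by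
      exact_mod_cast congrArg (Nat.cast (R := ℚ)) (Nat.choose_succ_succ (b) (d))
    simp only [Nat.choose_zero_right, Nat.cast_one, pow_zero, one_mul, Nat.sub_zero] at *
    linarith [hA, hp]

/-- Trinomial revision: `C(s+c+2, s-k) * C(c+k+2, k) = C(s+c+2, c+2) * C(s, k)`. -/
lemma aux_trinomial (s c k : ℕ) (hk : k ≤ s) :
    (s + c + 2).choose (s - k) * (c + k + 2).choose k
      = (s + c + 2).choose (c + 2) * s.choose k := by
  have h1 : (s + c + 2).choose (s - k) = (s + c + 2).choose (c + k + 2) := by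
    rw [← Nat.choose_symm (show c + k + 2 ≤ s + c + 2 by omega)]
    congr 1
    omega
  have h2 : (c + k + 2).choose k = (c + k + 2).choose (c + 2) := by
    rw [← Nat.choose_symm (show c + 2 ≤ c + k + 2 by omega)]
    congr 1
    omega
  rw [h1, h2, Nat.choose_mul (n := s + c + 2) (show c + 2 ≤ c + k + 2 by omega)]
  have e1 : s + c + 2 - (c + 2) = s := by omega
  have e2 : c + k + 2 - (c + 2) = k := by omega
  rw [e1, e2]

/-- `C(u+2, 2)` in `ℚ`. -/
lemma choose_two_q (u : ℕ) :
    ((u + 2).choose 2 : ℚ) = (((u : ℚ) + 2) ^ 2 - ((u : ℚ) + 2)) / 2 := by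
  have hdvd : 2 ∣ (u + 2) * (u + 1) := by
    rcases Nat.even_or_odd u with ⟨v, hv⟩ | ⟨v, hv⟩
    · exact ⟨(v + 1) * (v + v + 1), by subst hv; ring⟩
    · exact ⟨(2 * v + 3) * (v + 1), by subst hv; ring⟩
  have h : (u + 2).choose 2 * 2 = (u + 2) * (u + 1) := by
    rw [Nat.choose_two_right, show u + 2 - 1 = u + 1 from rfl, Nat.div_mul_cancel hdvd]
  have hq : ((u + 2).choose 2 : ℚ) * 2 = ((u : ℚ) + 2) * ((u : ℚ) + 1) := by
    exact_mod_cast congrArg (Nat.cast (R := ℚ)) h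
  rw [eq_div_iff (by norm_num : (2 : ℚ) ≠ 0), hq]
  ring

/-- The alternating-sum identity defining `h(t,c)` in Kleppe–Miró-Roig (for `t ≥ 3`). -/
theorem alternating_sum_h (t c : ℕ) (ht : 3 ≤ t) (hc : 2 ≤ c) :
    ∑ i ∈ Finset.Icc 2 (t - 1), (-1 : ℚ) ^ i * ((t + c - 1).choose (t - i - 1)) *
        ((t + c - 1 - i).choose (t - 1)) * ((c + i).choose (i - 2)) =
      ((c : ℚ) ^ 2 - c) *
        ((c + t - 1).factorial) / (2 * ((2 + c).factorial) * ((t - 3).factorial)) := by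
  obtain ⟨s, rfl⟩ : ∃ s, t = s + 3 := ⟨t - 3, by omega⟩
  obtain ⟨u, rfl⟩ : ∃ u, c = u + 2 := ⟨c - 2, by omega⟩
  have hIcc : Finset.Icc 2 (s + 3 - 1) = Finset.Ico 2 (s + 3) := by
    rw [show s + 3 - 1 = s + 2 from rfl, ← Finset.Ico_add_one_right_eq_Icc]; rfl
  rw [hIcc, Finset.sum_Ico_eq_sum_range, show s + 3 - 2 = s + 1 from by omega]
  have hterm : ∀ k ∈ Finset.range (s + 1),
      (-1 : ℚ) ^ (2 + k) * ((s + 3 + (u + 2) - 1).choose (s + 3 - (2 + k) - 1)) *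
          ((s + 3 + (u + 2) - 1 - (2 + k)).choose (s + 3 - 1)) *
          (((u + 2) + (2 + k)).choose (2 + k - 2))
        = ((s + (u + 2) + 2).choose ((u + 2) + 2) : ℚ) *
            ((-1 : ℚ) ^ k * (s.choose k) * ((s + (u + 2) - k).choose (s + 2))) := by
    intro k hk
    rw [Finset.mem_range] at hk
    have hks : k ≤ s := by omega
    have e2 : s + 3 - (2 + k) - 1 = s - k := by omega
    have e3 : s + 3 + (u + 2) - 1 - (2 + k) = s + (u + 2) - k := by omega
    have e4 : s + 3 - 1 = s + 2 := by omega
    have e5 : (u + 2) + (2 + k) = (u + 2) + k + 2 := by omega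
    have e6 : 2 + k - 2 = k := by omega
    have e1 : s + 3 + (u + 2) - 1 = s + (u + 2) + 2 := by omega
    rw [e2, e3, e4, e5, e6, e1]
    have key := aux_trinomial s (u + 2) k hks
    have keyQ : ((s + (u + 2) + 2).choose (s - k) : ℚ) * (((u + 2) + k + 2).choose k)
        = ((s + (u + 2) + 2).choose ((u + 2) + 2) : ℚ) * (s.choose k) := by
      exact_mod_cast congrArg (Nat.cast (R := ℚ)) key
    have hpow : (-1 : ℚ) ^ (2 + k) = (-1 : ℚ) ^ k := by
      rw [pow_add]; norm_num
    rw [hpow]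
    calc (-1 : ℚ) ^ k * ((s + (u + 2) + 2).choose (s - k)) *
            ((s + (u + 2) - k).choose (s + 2)) * (((u + 2) + k + 2).choose k)
        = (-1 : ℚ) ^ k * (((s + (u + 2) + 2).choose (s - k) : ℚ) *
            (((u + 2) + k + 2).choose k)) * ((s + (u + 2) - k).choose (s + 2)) := by ring
      _ = (-1 : ℚ) ^ k * (((s + (u + 2) + 2).choose ((u + 2) + 2) : ℚ) * (s.choose k)) *
            ((s + (u + 2) - k).choose (s + 2)) := by rw [keyQ]
      _ = ((s + (u + 2) + 2).choose ((u + 2) + 2) : ℚ) *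
            ((-1 : ℚ) ^ k * (s.choose k) * ((s + (u + 2) - k).choose (s + 2))) := by ring
  rw [Finset.sum_congr rfl hterm, ← Finset.mul_sum, aux_fin_diff s (u + 2) 2]
  rw [show (u + 2) + (s + 3) - 1 = s + (u + 2) + 2 from by omega,
    show s + 3 - 3 = s from by omega, show 2 + (u + 2) = (u + 2) + 2 from by omega]
  have hchoose1 : ((s + (u + 2) + 2).choose ((u + 2) + 2) : ℚ)
      = (s + (u + 2) + 2).factorial / (((u + 2) + 2).factorial * s.factorial) := by
    rw [Nat.cast_choose ℚ (show (u + 2) + 2 ≤ s + (u + 2) + 2 by omega),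
      show s + (u + 2) + 2 - ((u + 2) + 2) = s from by omega]
  rw [hchoose1, choose_two_q]
  have hf1 : (((u + 2) + 2).factorial : ℚ) ≠ 0 := by positivity
  have hf2 : (s.factorial : ℚ) ≠ 0 := by positivity
  field_simp

  push_cast; ring
end

section
/- For all integers t ≥ 3 and n ≥ 3, the quantity (-1 - n(t-2) + t) * (n+t-2)! / (n! * (t-1)!) is at most t(5 + 3t - 2t²)/6, and t(5 + 3t - 2t²)/6 ≤ -2. -/
private lemma chi_aux (t : ℕ) (ht : 3 ≤ t) :
    ∀ n : ℕ, 3 ≤ n →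
    ((-1 - (n : ℚ) * ((t : ℚ) - 2) + t) * ((n + t - 2).factorial) /
        ((n.factorial : ℚ) * ((t - 1).factorial)) ≤
      (t : ℚ) * (5 + 3 * t - 2 * t ^ 2) / 6) := by
  intro n hn
  induction n, hn using Nat.le_induction with
  | base =>
    obtain ⟨s, rfl⟩ : ∃ s, t = s + 3 := ⟨t - 3, by omega⟩
    have e1 : 3 + (s + 3) - 2 = (s + 2) + 1 + 1 := by omega
    have e2 : s + 3 - 1 = s + 2 := by omega
    rw [e1, e2, Nat.factorial_succ, Nat.factorial_succ]
    have hp : (0 : ℚ) < ((s + 2).factorial : ℚ) := by positivity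
    rw [show (Nat.factorial 3) = 6 from rfl]
    push_cast
    rw [div_le_div_iff₀ (by positivity) (by norm_num)]
    ring_nf
    nlinarith [hp, sq_nonneg ((s:ℚ))]
  | succ n hn3 ih =>
    have ht' : (3 : ℚ) ≤ t := by exact_mod_cast ht
    have hn' : (3 : ℚ) ≤ n := by exact_mod_cast hn3
    have e1 : (n + 1) + t - 2 = (n + t - 2) + 1 := by omega
    rw [e1, Nat.factorial_succ, Nat.factorial_succ]
    set K : ℚ := ((n + t - 2).factorial : ℚ) with hKdef
    set N : ℚ := (n.factorial : ℚ) with hNdef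
    set M : ℚ := ((t - 1).factorial : ℚ) with hMdef
    have hK : 0 < K := by positivity
    have hN : 0 < N := by positivity
    have hM : 0 < M := by positivity
    have hk : ((n + t - 2 : ℕ) : ℚ) = (n : ℚ) + t - 2 := by
      have := Nat.cast_sub (R := ℚ) (show 2 ≤ n + t by omega)
      push_cast at this ⊢
      linarith
    push_cast
    rw [hk]
    -- Show f(n+1) ≤ f(n), then conclude by ih
    have key : (-1 - ((n : ℚ) + 1) * ((t : ℚ) - 2) + t) * ((n : ℚ) + t - 2 + 1)
        ≤ (-1 - (n : ℚ) * ((t : ℚ) - 2) + t) * ((n : ℚ) + 1) := by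
      nlinarith [mul_nonneg (mul_nonneg (by linarith : (0:ℚ) ≤ (n:ℚ))
        (by linarith : (0:ℚ) ≤ (t:ℚ) - 2)) (by linarith : (0:ℚ) ≤ (t:ℚ) - 1)]
    have step : (-1 - ((n : ℚ) + 1) * ((t : ℚ) - 2) + t) * (((n : ℚ) + t - 2 + 1) * K) /
        ((((n : ℚ) + 1) * N) * M)
        ≤ (-1 - (n : ℚ) * ((t : ℚ) - 2) + t) * K / (N * M) := by
      rw [div_le_div_iff₀ (by positivity) (by positivity)]
      calc (-1 - ((n : ℚ) + 1) * ((t : ℚ) - 2) + t) * (((n : ℚ) + t - 2 + 1) * K) * (N * M)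
          = ((-1 - ((n : ℚ) + 1) * ((t : ℚ) - 2) + t) * ((n : ℚ) + t - 2 + 1)) * (K * N * M) := by
            ring
        _ ≤ ((-1 - (n : ℚ) * ((t : ℚ) - 2) + t) * ((n : ℚ) + 1)) * (K * N * M) := by
            exact mul_le_mul_of_nonneg_right key (by positivity)
        _ = (-1 - (n : ℚ) * ((t : ℚ) - 2) + t) * K * ((((n : ℚ) + 1) * N) * M) := by ring
    calc (-1 - ((n : ℚ) + 1) * ((t : ℚ) - 2) + t) * (((n : ℚ) + t - 2 + 1) * K) /
          ((((n : ℚ) + 1) * N) * M)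
        ≤ (-1 - (n : ℚ) * ((t : ℚ) - 2) + t) * K / (N * M) := step
      _ ≤ (t : ℚ) * (5 + 3 * t - 2 * t ^ 2) / 6 := ih

/-- The inequalities `χ(L₁ ⊗ L₂^∨) ≤ t(5+3t-2t²)/6 ≤ -2` for linear determinantal curves
(Proposition 4.8). -/
theorem chi_curve_bound (t n : ℕ) (ht : 3 ≤ t) (hn : 3 ≤ n) :
    ((-1 - (n : ℚ) * ((t : ℚ) - 2) + t) * ((n + t - 2).factorial) /
        ((n.factorial : ℚ) * ((t - 1).factorial)) ≤
      (t : ℚ) * (5 + 3 * t - 2 * t ^ 2) / 6) ∧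
    (t : ℚ) * (5 + 3 * t - 2 * t ^ 2) / 6 ≤ -2 := by
  have ht' : (3 : ℚ) ≤ t := by exact_mod_cast ht
  refine ⟨chi_aux t ht n hn, ?_⟩
  rw [div_le_iff₀ (by norm_num : (0:ℚ) < 6)]
  nlinarith [mul_nonneg (by linarith : (0:ℚ) ≤ (t:ℚ) - 3)
    (by positivity : (0:ℚ) ≤ 2 * (t:ℚ)^2 + 3 * (t:ℚ) + 4)]
end
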